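/- arXiv:0901.2859 — 3 statements merged into one kernel-verified Lean document; each statement's English description precedes it below -/
import Mathlib

section
/- Let A be an invertible n×n real tridiagonal matrix, let F ∈ ℝⁿ, and let X be the solution of A X = F. Fix indices 1 = n₀ ≤ n₁ < n₂ < … < n_p < n and set n_{p+1} = n + 1, with 1 < n_i < n for i = 1,…,p. Assume each matrix B^R_{n_j} (1 ≤ j ≤ p) and B^L_{n_j} (1 ≤ j ≤ p) is invertible, and let Z^R_{n_j} and Z^L_{n_j} be defined as below. For j = 1,…,p+1 define β^L_j = Σ_{k=n_{j−1}}^{n_j − 1} F_k · (A⁻¹)_{n_{j−1}, k}, and for j = 1,…,p define β^R_j = Σ_{k=n_{j−1}}^{n_j − 1} F_k · (A⁻¹)_{n_j, k}. Then for every i = 1,…,p: X_{n_i} = Σ_{j=1}^{i} β^R_j · (Z^R_{n_j})_{n_i} + Σ_{j=i+1}^{p+1} β^L_j · (Z^L_{n_{j−1}})_{n_i}. -/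
open Matrix Finset

/-- Extension of the paper's one-sided matrix `B^L` (boundary at the
0-indexed position `k`) to an `n × n` matrix: rows below `k` are the
corresponding rows of `A`, row `k` and all rows above it are identity rows.
For a tridiagonal `A` this is the block matrix `B^L ⊕ I`. -/
def BLfull {n : ℕ} (A : Matrix (Fin n) (Fin n) ℝ) (k : Fin n) :
    Matrix (Fin n) (Fin n) ℝ :=
  fun i j => if (i : ℕ) < (k : ℕ) then A i j else if i = j then 1 else 0

/-- Extension of the paper's one-sided matrix `B^R` (boundary at the
0-indexed position `k`) to an `n × n` matrix: rows above `k` are the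
corresponding rows of `A`, row `k` and all rows below it are identity rows.
For a tridiagonal `A` this is the block matrix `I ⊕ B^R`. -/
def BRfull {n : ℕ} (A : Matrix (Fin n) (Fin n) ℝ) (k : Fin n) :
    Matrix (Fin n) (Fin n) ℝ :=
  fun i j => if (k : ℕ) < (i : ℕ) then A i j else if i = j then 1 else 0

lemma key_right {n : ℕ} (A : Matrix (Fin n) (Fin n) ℝ)
    (htri : ∀ i j : Fin n, (i : ℕ) + 1 < (j : ℕ) ∨ (j : ℕ) + 1 < (i : ℕ) → A i j = 0)
    (q : Fin n) (Z : Fin n → ℝ)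
    (hU : IsUnit (BRfull A q))
    (hZ : (BRfull A q).mulVec Z = Pi.single q 1)
    (c : Fin n → ℝ)
    (hc : ∀ r : Fin n, (q : ℕ) < (r : ℕ) → ∑ t, A r t * c t = 0) :
    ∀ i : Fin n, (q : ℕ) ≤ (i : ℕ) → c i = c q * Z i := by
  have hZrow := fun r => congrFun hZ r
  have hZq : Z q = 1 := by
    have h := hZrow q
    simpa [Matrix.mulVec, dotProduct, BRfull, Pi.single_apply, ite_mul] using h
  set w : Fin n → ℝ := fun r => if (q : ℕ) ≤ (r : ℕ) then c r - c q * Z r else 0 with hwdef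
  have hw : (BRfull A q).mulVec w = 0 := by
    funext r
    by_cases hr : (q : ℕ) < (r : ℕ)
    · have step1 : (BRfull A q).mulVec w r = ∑ t, A r t * w t := by
        simp [Matrix.mulVec, dotProduct, BRfull, hr]
      have step2 : ∑ t, A r t * w t = ∑ t, A r t * (c t - c q * Z t) := by
        refine Finset.sum_congr rfl fun t _ => ?_
        by_cases ht : (q : ℕ) ≤ (t : ℕ)
        · simp only [hwdef]; rw [if_pos ht]
        · have hA0 : A r t = 0 := htri r t (Or.inr (by omega))
          simp only [hwdef]; rw [if_neg ht, hA0]; ring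
      have hAZ : ∑ t, A r t * Z t = 0 := by
        have h := hZrow r
        have h2 : (BRfull A q).mulVec Z r = ∑ t, A r t * Z t := by
          simp [Matrix.mulVec, dotProduct, BRfull, hr]
        rw [h2] at h
        have hrq : r ≠ q := by intro e; rw [e] at hr; omega
        simpa [Pi.single_apply, hrq] using h
      have : ∑ t, A r t * (c t - c q * Z t)
          = (∑ t, A r t * c t) - c q * ∑ t, A r t * Z t := by
        rw [Finset.mul_sum]
        rw [← Finset.sum_sub_distrib]
        refine Finset.sum_congr rfl fun t _ => by ring
      rw [step1, step2, this, hc r hr, hAZ]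
      simp
    · have step1 : (BRfull A q).mulVec w r = w r := by
        simp [Matrix.mulVec, dotProduct, BRfull, hr, ite_mul]
      rw [step1]
      rcases eq_or_lt_of_le (not_lt.mp hr) with he | hlt
      · have hrq : r = q := Fin.ext he
        rw [hrq]; simp only [hwdef, Pi.zero_apply]; rw [if_pos le_rfl, hZq]; ring
      · simp only [hwdef, Pi.zero_apply]; rw [if_neg (by omega)]
  have hdet : IsUnit (BRfull A q).det := (Matrix.isUnit_iff_isUnit_det _).mp hU
  have hw0 : w = 0 := by
    have h1 : (BRfull A q)⁻¹.mulVec ((BRfull A q).mulVec w) = w := by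
      rw [Matrix.mulVec_mulVec, Matrix.nonsing_inv_mul _ hdet, Matrix.one_mulVec]
    rw [hw] at h1
    simpa [Matrix.mulVec_zero] using h1.symm
  intro i hqi
  have := congrFun hw0 i
  simp only [hwdef, Pi.zero_apply] at this
  rw [if_pos hqi] at this
  linarith


lemma key_left {n : ℕ} (A : Matrix (Fin n) (Fin n) ℝ)
    (htri : ∀ i j : Fin n, (i : ℕ) + 1 < (j : ℕ) ∨ (j : ℕ) + 1 < (i : ℕ) → A i j = 0)
    (q : Fin n) (Z : Fin n → ℝ)
    (hU : IsUnit (BLfull A q))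
    (hZ : (BLfull A q).mulVec Z = Pi.single q 1)
    (c : Fin n → ℝ)
    (hc : ∀ r : Fin n, (r : ℕ) < (q : ℕ) → ∑ t, A r t * c t = 0) :
    ∀ i : Fin n, (i : ℕ) ≤ (q : ℕ) → c i = c q * Z i := by
  have hZrow := fun r => congrFun hZ r
  have hZq : Z q = 1 := by
    have h := hZrow q
    simpa [Matrix.mulVec, dotProduct, BLfull, Pi.single_apply, ite_mul] using h
  set w : Fin n → ℝ := fun r => if (r : ℕ) ≤ (q : ℕ) then c r - c q * Z r else 0 with hwdef
  have hw : (BLfull A q).mulVec w = 0 := by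
    funext r
    by_cases hr : (r : ℕ) < (q : ℕ)
    · have step1 : (BLfull A q).mulVec w r = ∑ t, A r t * w t := by
        simp [Matrix.mulVec, dotProduct, BLfull, hr]
      have step2 : ∑ t, A r t * w t = ∑ t, A r t * (c t - c q * Z t) := by
        refine Finset.sum_congr rfl fun t _ => ?_
        by_cases ht : (t : ℕ) ≤ (q : ℕ)
        · simp only [hwdef]; rw [if_pos ht]
        · have hA0 : A r t = 0 := htri r t (Or.inl (by omega))
          simp only [hwdef]; rw [if_neg ht, hA0]; ring
      have hAZ : ∑ t, A r t * Z t = 0 := by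
        have h := hZrow r
        have h2 : (BLfull A q).mulVec Z r = ∑ t, A r t * Z t := by
          simp [Matrix.mulVec, dotProduct, BLfull, hr]
        rw [h2] at h
        have hrq : r ≠ q := by intro e; rw [e] at hr; omega
        simpa [Pi.single_apply, hrq] using h
      have : ∑ t, A r t * (c t - c q * Z t)
          = (∑ t, A r t * c t) - c q * ∑ t, A r t * Z t := by
        rw [Finset.mul_sum]
        rw [← Finset.sum_sub_distrib]
        refine Finset.sum_congr rfl fun t _ => by ring
      rw [step1, step2, this, hc r hr, hAZ]
      simp
    · have step1 : (BLfull A q).mulVec w r = w r := by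
        simp [Matrix.mulVec, dotProduct, BLfull, hr, ite_mul]
      rw [step1]
      rcases eq_or_lt_of_le (not_lt.mp hr) with he | hlt
      · have hrq : r = q := Fin.ext he.symm
        rw [hrq]; simp only [hwdef, Pi.zero_apply]; rw [if_pos le_rfl, hZq]; ring
      · simp only [hwdef, Pi.zero_apply]; rw [if_neg (by omega)]
  have hdet : IsUnit (BLfull A q).det := (Matrix.isUnit_iff_isUnit_det _).mp hU
  have hw0 : w = 0 := by
    have h1 : (BLfull A q)⁻¹.mulVec ((BLfull A q).mulVec w) = w := by
      rw [Matrix.mulVec_mulVec, Matrix.nonsing_inv_mul _ hdet, Matrix.one_mulVec]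
    rw [hw] at h1
    simpa [Matrix.mulVec_zero] using h1.symm
  intro i hqi
  have := congrFun hw0 i
  simp only [hwdef, Pi.zero_apply] at this
  rw [if_pos hqi] at this
  linarith

/-- Theorem 2 of the paper (the main parallel sweep theorem), stated
0-indexed: `m 0 = 0`, `m (p+1) = n`, `0 < m i < n - 1` for `1 ≤ i ≤ p`.
Each selected component `X (m i)` of the solution of the tridiagonal system
`A X = F` is a linear combination of the locally computable coefficients
`βR`, `βL` (built from rows of `A⁻¹`) with weights given by the solutions
`ZR`, `ZL` of the one-sided boundary systems. -/
theorem stmt_4 (n p : ℕ) (hn : 2 ≤ n)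
    (A : Matrix (Fin n) (Fin n) ℝ)
    (htri : ∀ i j : Fin n, (i : ℕ) + 1 < (j : ℕ) ∨ (j : ℕ) + 1 < (i : ℕ) → A i j = 0)
    (hA : IsUnit A)
    (F X : Fin n → ℝ) (hX : A.mulVec X = F)
    (m : ℕ → ℕ) (hm0 : m 0 = 0) (hmtop : m (p + 1) = n)
    (hpos : ∀ i, 1 ≤ i → i ≤ p → 0 < m i ∧ m i < n - 1)
    (hmono : ∀ j, 1 ≤ j → j ≤ p → m j < m (j + 1))
    (ZR ZL : ℕ → Fin n → ℝ) (βR βL : ℕ → ℝ)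
    (hZR : ∀ j, ∀ _ : 1 ≤ j, ∀ _ : j ≤ p, ∀ hj : m j < n,
      IsUnit (BRfull A ⟨m j, hj⟩) ∧
        (BRfull A ⟨m j, hj⟩).mulVec (ZR j) = Pi.single ⟨m j, hj⟩ 1)
    (hZL : ∀ j, ∀ _ : 1 ≤ j, ∀ _ : j ≤ p, ∀ hj : m j < n,
      IsUnit (BLfull A ⟨m j, hj⟩) ∧
        (BLfull A ⟨m j, hj⟩).mulVec (ZL j) = Pi.single ⟨m j, hj⟩ 1)
    (hβR : ∀ j, ∀ _ : 1 ≤ j, ∀ _ : j ≤ p, ∀ hj : m j < n,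
      βR j = ∑ k : Fin n,
        if m (j - 1) ≤ (k : ℕ) ∧ (k : ℕ) < m j then F k * A⁻¹ ⟨m j, hj⟩ k else 0)
    (hβL : ∀ j, ∀ _ : 1 ≤ j, ∀ _ : j ≤ p + 1, ∀ hj : m (j - 1) < n,
      βL j = ∑ k : Fin n,
        if m (j - 1) ≤ (k : ℕ) ∧ (k : ℕ) < m j then F k * A⁻¹ ⟨m (j - 1), hj⟩ k else 0) :
    ∀ i, ∀ _ : 1 ≤ i, ∀ _ : i ≤ p, ∀ hi : m i < n,
      X ⟨m i, hi⟩ =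
        (∑ j ∈ Finset.Icc 1 i, βR j * ZR j ⟨m i, hi⟩) +
          ∑ j ∈ Finset.Icc (i + 1) (p + 1), βL j * ZL (j - 1) ⟨m i, hi⟩ := by
  intro i hi1 hip hin
  have hp1 : 1 ≤ p := le_trans hi1 hip
  have hstep : ∀ j, j ≤ p → m j < m (j + 1) := by
    intro j hj
    rcases Nat.eq_zero_or_pos j with h0 | h1
    · subst h0; rw [hm0]; exact (hpos 1 le_rfl hp1).1
    · exact hmono j h1 hj
  have hsm : ∀ b, b ≤ p + 1 → ∀ a, a < b → m a < m b := by
    intro b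
    induction b with
    | zero => omega
    | succ b ih =>
      intro hb a hab
      rcases Nat.lt_succ_iff_lt_or_eq.mp hab with h | h
      · exact lt_trans (ih (by omega) a h) (hstep b (by omega))
      · subst h; exact hstep a (by omega)
  have hmle : ∀ a b, a ≤ b → b ≤ p + 1 → m a ≤ m b := by
    intro a b hab hb
    rcases eq_or_lt_of_le hab with h | h
    · subst h; exact le_rfl
    · exact le_of_lt (hsm b hb a h)
  have hmn : ∀ j, 1 ≤ j → j ≤ p → m j < n := fun j h1 h2 => by
    have := (hpos j h1 h2).2; omega
  have hdetA : IsUnit A.det := (Matrix.isUnit_iff_isUnit_det _).mp hA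
  have hXinv : X = A⁻¹.mulVec F := by
    rw [← hX, Matrix.mulVec_mulVec, Matrix.nonsing_inv_mul _ hdetA, Matrix.one_mulVec]
  set mi : Fin n := ⟨m i, hin⟩ with hmidef
  -- each k lies in exactly one interval
  have hpart : ∀ k : Fin n, ∃ j, (1 ≤ j ∧ j ≤ p + 1 ∧ m (j-1) ≤ (k:ℕ) ∧ (k:ℕ) < m j) ∧
      ∀ j', 1 ≤ j' → j' ≤ p + 1 → m (j'-1) ≤ (k:ℕ) → (k:ℕ) < m j' → j' = j := by
    intro k
    have hex : ∃ j, (k:ℕ) < m j := ⟨p+1, by rw [hmtop]; exact k.isLt⟩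
    refine ⟨Nat.find hex, ⟨?_, ?_, ?_, Nat.find_spec hex⟩, ?_⟩
    · by_contra h
      have h0 : Nat.find hex = 0 := by omega
      have := Nat.find_spec hex
      rw [h0, hm0] at this; omega
    · exact Nat.find_min' hex (by rw [hmtop]; exact k.isLt)
    · have h1 : 1 ≤ Nat.find hex := by
        by_contra h
        have h0 : Nat.find hex = 0 := by omega
        have := Nat.find_spec hex
        rw [h0, hm0] at this; omega
      have := Nat.find_min hex (m := Nat.find hex - 1) (by omega)
      omega
    · intro j' h1' h2' h3' h4'
      by_contra hne
      rcases lt_or_gt_of_ne hne with hlt | hgt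
      · exact Nat.find_min hex hlt h4'
      · have hle : m (Nat.find hex) ≤ m (j' - 1) := hmle _ _ (by omega) (by omega)
        have := Nat.find_spec hex
        omega
  -- rewrite the full sum as a sum over blocks
  have hsplit : ∑ k : Fin n, A⁻¹ mi k * F k
      = ∑ j ∈ Finset.Icc 1 (p+1), ∑ k : Fin n,
          (if m (j-1) ≤ (k:ℕ) ∧ (k:ℕ) < m j then A⁻¹ mi k * F k else 0) := by
    rw [Finset.sum_comm]
    refine Finset.sum_congr rfl fun k _ => ?_
    obtain ⟨j₀, ⟨h1, h2, h3, h4⟩, huniq⟩ := hpart k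
    rw [Finset.sum_eq_single j₀]
    · rw [if_pos ⟨h3, h4⟩]
    · intro j hj hne
      rw [if_neg]
      rintro ⟨ha, hb⟩
      exact hne (huniq j (Finset.mem_Icc.mp hj).1 (Finset.mem_Icc.mp hj).2 ha hb)
    · intro h; exact absurd (Finset.mem_Icc.mpr ⟨h1, h2⟩) h
  -- right blocks
  have hright : ∀ j ∈ Finset.Icc 1 i, (∑ k : Fin n,
      (if m (j-1) ≤ (k:ℕ) ∧ (k:ℕ) < m j then A⁻¹ mi k * F k else 0)) = βR j * ZR j mi := by
    intro j hj
    obtain ⟨hj1, hji⟩ := Finset.mem_Icc.mp hj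
    have hjp : j ≤ p := le_trans hji hip
    have hjn : m j < n := hmn j hj1 hjp
    obtain ⟨hU, hZ⟩ := hZR j hj1 hjp hjn
    have hqi : m j ≤ m i := hmle j i hji (by omega)
    have hcol : ∀ k : Fin n, (k:ℕ) < m j →
        A⁻¹ mi k = A⁻¹ ⟨m j, hjn⟩ k * ZR j mi := by
      intro k hk
      refine key_right A htri ⟨m j, hjn⟩ (ZR j) hU hZ (fun t => A⁻¹ t k) ?_ mi hqi
      intro r hr
      have hrk : r ≠ k := by
        intro e; subst e; simp at hr; omega
      have h1 : ∑ t, A r t * A⁻¹ t k = (A * A⁻¹) r k := (Matrix.mul_apply).symm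
      rw [h1, Matrix.mul_nonsing_inv _ hdetA, Matrix.one_apply_ne hrk]
    have step : (∑ k : Fin n,
        (if m (j-1) ≤ (k:ℕ) ∧ (k:ℕ) < m j then A⁻¹ mi k * F k else 0))
        = (∑ k : Fin n, (if m (j-1) ≤ (k:ℕ) ∧ (k:ℕ) < m j
            then F k * A⁻¹ ⟨m j, hjn⟩ k else 0)) * ZR j mi := by
      rw [Finset.sum_mul]
      refine Finset.sum_congr rfl fun k _ => ?_
      by_cases hk : m (j-1) ≤ (k:ℕ) ∧ (k:ℕ) < m j
      · rw [if_pos hk, if_pos hk, hcol k hk.2]; ring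
      · rw [if_neg hk, if_neg hk, zero_mul]
    rw [step, hβR j hj1 hjp hjn]
  -- left blocks
  have hleft : ∀ j ∈ Finset.Icc (i+1) (p+1), (∑ k : Fin n,
      (if m (j-1) ≤ (k:ℕ) ∧ (k:ℕ) < m j then A⁻¹ mi k * F k else 0))
      = βL j * ZL (j-1) mi := by
    intro j hj
    obtain ⟨hji, hjp⟩ := Finset.mem_Icc.mp hj
    have hj1 : 1 ≤ j - 1 := by omega
    have hjp' : j - 1 ≤ p := by omega
    have hjn : m (j-1) < n := hmn (j-1) hj1 hjp'
    obtain ⟨hU, hZ⟩ := hZL (j-1) hj1 hjp' hjn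
    have hqi : m i ≤ m (j-1) := hmle i (j-1) (by omega) (by omega)
    have hcol : ∀ k : Fin n, m (j-1) ≤ (k:ℕ) →
        A⁻¹ mi k = A⁻¹ ⟨m (j-1), hjn⟩ k * ZL (j-1) mi := by
      intro k hk
      refine key_left A htri ⟨m (j-1), hjn⟩ (ZL (j-1)) hU hZ (fun t => A⁻¹ t k) ?_ mi hqi
      intro r hr
      have hrk : r ≠ k := by
        intro e; subst e; simp at hr; omega
      have h1 : ∑ t, A r t * A⁻¹ t k = (A * A⁻¹) r k := (Matrix.mul_apply).symm
      rw [h1, Matrix.mul_nonsing_inv _ hdetA, Matrix.one_apply_ne hrk]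
    have step : (∑ k : Fin n,
        (if m (j-1) ≤ (k:ℕ) ∧ (k:ℕ) < m j then A⁻¹ mi k * F k else 0))
        = (∑ k : Fin n, (if m (j-1) ≤ (k:ℕ) ∧ (k:ℕ) < m j
            then F k * A⁻¹ ⟨m (j-1), hjn⟩ k else 0)) * ZL (j-1) mi := by
      rw [Finset.sum_mul]
      refine Finset.sum_congr rfl fun k _ => ?_
      by_cases hk : m (j-1) ≤ (k:ℕ) ∧ (k:ℕ) < m j
      · rw [if_pos hk, if_pos hk, hcol k hk.1]; ring
      · rw [if_neg hk, if_neg hk, zero_mul]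
    rw [step, hβL j (by omega) hjp hjn]
  -- assemble
  have hIccsplit : Finset.Icc 1 (p+1) = Finset.Icc 1 i ∪ Finset.Icc (i+1) (p+1) := by
    ext x; simp only [Finset.mem_Icc, Finset.mem_union]; omega
  have hdisj : Disjoint (Finset.Icc 1 i) (Finset.Icc (i+1) (p+1)) := by
    rw [Finset.disjoint_left]
    intro a ha hb
    simp only [Finset.mem_Icc] at ha hb
    omega
  have hXmi : X mi = ∑ k : Fin n, A⁻¹ mi k * F k := by
    rw [hXinv]; simp [Matrix.mulVec, dotProduct]
  rw [hXmi, hsplit, hIccsplit, Finset.sum_union hdisj,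
    Finset.sum_congr rfl hright, Finset.sum_congr rfl hleft]
end

section
/- Let A be an n×n real tridiagonal matrix, let F ∈ ℝⁿ, and let X satisfy A X = F. Fix indices 1 ≤ k₁ < m < k₂ ≤ n. Let A' be the (k₂ − k₁ + 1)×(k₂ − k₁ + 1) matrix indexed by k₁,…,k₂ whose first row is e_{k₁}ᵀ, whose last row is e_{k₂}ᵀ, and whose interior rows coincide with rows k₁+1,…,k₂−1 of A restricted to columns k₁,…,k₂; assume A' is invertible. Let W solve A' W = q where q_{k₁} = q_{k₂} = 0 and q_s = F_s for k₁ < s < k₂; let R solve A' R = e_{k₁}; let L solve A' L = e_{k₂}. Then X_m = W_m + X_{k₁} · R_m + X_{k₂} · L_m. -/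
open Matrix Finset

/-- The superposition identity underlying Theorem 3 (the dichotomy step) of
the paper, stated 0-indexed with `k₁ < m < k₂ < n`: on the block
`k₁, …, k₂` the matrix `A'` has first row `e_{k₁}ᵀ`, last row `e_{k₂}ᵀ`,
and interior rows coinciding with the rows of `A` restricted to the columns
`k₁, …, k₂`.  If `W` is the particular solution (zero boundary data,
interior right-hand side `F`), and `R`, `L` solve the homogeneous boundary
problems `A' R = e_{k₁}`, `A' L = e_{k₂}`, then
`X m = W m + X k₁ * R m + X k₂ * L m`. -/
theorem stmt_5 (n k₁ m k₂ : ℕ) (h1 : k₁ < m) (h2 : m < k₂) (h3 : k₂ < n)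
    (A : Matrix (Fin n) (Fin n) ℝ)
    (htri : ∀ i j : Fin n, (i : ℕ) + 1 < (j : ℕ) ∨ (j : ℕ) + 1 < (i : ℕ) → A i j = 0)
    (F X : Fin n → ℝ) (hX : A.mulVec X = F)
    (A' : Matrix (Fin (k₂ - k₁ + 1)) (Fin (k₂ - k₁ + 1)) ℝ)
    (hrow0 : ∀ r : Fin (k₂ - k₁ + 1), A' ⟨0, by omega⟩ r = if (r : ℕ) = 0 then 1 else 0)
    (hrowlast : ∀ r : Fin (k₂ - k₁ + 1),
      A' ⟨k₂ - k₁, by omega⟩ r = if (r : ℕ) = k₂ - k₁ then 1 else 0)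
    (hrowint : ∀ s r : Fin (k₂ - k₁ + 1), 0 < (s : ℕ) → (s : ℕ) < k₂ - k₁ →
      A' s r = A ⟨k₁ + (s : ℕ), by have := s.isLt; omega⟩
        ⟨k₁ + (r : ℕ), by have := r.isLt; omega⟩)
    (hA' : IsUnit A')
    (q W R L : Fin (k₂ - k₁ + 1) → ℝ)
    (hq0 : q ⟨0, by omega⟩ = 0) (hqlast : q ⟨k₂ - k₁, by omega⟩ = 0)
    (hqint : ∀ s : Fin (k₂ - k₁ + 1), 0 < (s : ℕ) → (s : ℕ) < k₂ - k₁ →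
      q s = F ⟨k₁ + (s : ℕ), by have := s.isLt; omega⟩)
    (hW : A'.mulVec W = q)
    (hR : A'.mulVec R = Pi.single ⟨0, by omega⟩ 1)
    (hL : A'.mulVec L = Pi.single ⟨k₂ - k₁, by omega⟩ 1) :
    X ⟨m, by omega⟩ =
      W ⟨m - k₁, by omega⟩ + X ⟨k₁, by omega⟩ * R ⟨m - k₁, by omega⟩
        + X ⟨k₂, by omega⟩ * L ⟨m - k₁, by omega⟩ := by
  have hinj : Function.Injective A'.mulVec := mulVec_injective_iff_isUnit.2 hA'
  have hN : k₂ - k₁ < k₂ - k₁ + 1 := by omega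
  have h0N : 0 < k₂ - k₁ + 1 := by omega
  set Y : Fin (k₂ - k₁ + 1) → ℝ :=
    fun s => X ⟨k₁ + (s : ℕ), by have := s.isLt; omega⟩ with hYdef
  have key : A'.mulVec Y =
      q + X ⟨k₁, by omega⟩ • (Pi.single (⟨0, h0N⟩ : Fin (k₂ - k₁ + 1)) (1 : ℝ) : Fin (k₂ - k₁ + 1) → ℝ)
        + X ⟨k₂, by omega⟩ • (Pi.single (⟨k₂ - k₁, hN⟩ : Fin (k₂ - k₁ + 1)) (1 : ℝ) : Fin (k₂ - k₁ + 1) → ℝ) := by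
    funext s
    rcases eq_or_ne (s : ℕ) 0 with h0 | h0
    · have hs : s = ⟨0, h0N⟩ := Fin.ext h0
      subst hs
      have hmv : A'.mulVec Y ⟨0, h0N⟩ = Y ⟨0, h0N⟩ := by
        simp only [Matrix.mulVec, dotProduct, hrow0]
        have hc : ∀ r : Fin (k₂ - k₁ + 1),
            (if (r : ℕ) = 0 then (1:ℝ) else 0) * Y r
              = (if r = ⟨0, h0N⟩ then Y r else 0) := by
          intro r
          by_cases h : (r : ℕ) = 0
          · rw [if_pos h, if_pos (Fin.ext h), one_mul]
          · rw [if_neg h, if_neg (fun e => h (congrArg Fin.val e)), zero_mul]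
        rw [Finset.sum_congr rfl fun r _ => hc r, Finset.sum_ite_eq' Finset.univ _ Y,
          if_pos (Finset.mem_univ _)]
      rw [hmv]
      have hne : (⟨0, h0N⟩ : Fin (k₂ - k₁ + 1)) ≠ ⟨k₂ - k₁, hN⟩ := by
        simp [Fin.ext_iff]; omega
      have hz : (Pi.single (⟨k₂ - k₁, hN⟩ : Fin (k₂ - k₁ + 1)) (1:ℝ) : Fin (k₂ - k₁ + 1) → ℝ) ⟨0, h0N⟩ = 0 :=
        Pi.single_eq_of_ne hne 1
      have hYv : Y ⟨0, h0N⟩ = X ⟨k₁, by omega⟩ :=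
        congrArg X (by apply Fin.ext; simp)
      rw [hYv]
      simp only [Pi.add_apply, Pi.smul_apply, smul_eq_mul]
      rw [hq0, Pi.single_eq_same, hz, mul_one, mul_zero, add_zero, zero_add]
    rcases eq_or_ne (s : ℕ) (k₂ - k₁) with hl | hl
    · have hs : s = ⟨k₂ - k₁, hN⟩ := Fin.ext hl
      subst hs
      have hmv : A'.mulVec Y ⟨k₂ - k₁, hN⟩ = Y ⟨k₂ - k₁, hN⟩ := by
        simp only [Matrix.mulVec, dotProduct, hrowlast]
        have hc : ∀ r : Fin (k₂ - k₁ + 1),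
            (if (r : ℕ) = k₂ - k₁ then (1:ℝ) else 0) * Y r
              = (if r = ⟨k₂ - k₁, hN⟩ then Y r else 0) := by
          intro r
          by_cases h : (r : ℕ) = k₂ - k₁
          · rw [if_pos h, if_pos (Fin.ext h), one_mul]
          · rw [if_neg h, if_neg (fun e => h (congrArg Fin.val e)), zero_mul]
        rw [Finset.sum_congr rfl fun r _ => hc r, Finset.sum_ite_eq' Finset.univ _ Y,
          if_pos (Finset.mem_univ _)]
      rw [hmv]
      have hne : (⟨k₂ - k₁, hN⟩ : Fin (k₂ - k₁ + 1)) ≠ ⟨0, h0N⟩ := by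
        simp [Fin.ext_iff]; omega
      have hYv : Y ⟨k₂ - k₁, hN⟩ = X ⟨k₂, by omega⟩ := by
        simp only [hYdef]; congr 1; apply Fin.ext; simp; omega
      rw [hYv]
      have hz : (Pi.single (⟨0, h0N⟩ : Fin (k₂ - k₁ + 1)) (1:ℝ) : Fin (k₂ - k₁ + 1) → ℝ) ⟨k₂ - k₁, hN⟩ = 0 :=
        Pi.single_eq_of_ne hne 1
      simp only [Pi.add_apply, Pi.smul_apply, smul_eq_mul]
      rw [hqlast, Pi.single_eq_same, hz, mul_one, mul_zero, add_zero, zero_add]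
    · -- interior row
      have hs0 : 0 < (s : ℕ) := Nat.pos_of_ne_zero h0
      have hsl : (s : ℕ) < k₂ - k₁ := lt_of_le_of_ne (by omega : (s:ℕ) ≤ k₂ - k₁) hl
      have hin : k₁ + (s : ℕ) < n := by have := s.isLt; omega
      set i : Fin n := ⟨k₁ + (s : ℕ), hin⟩ with hidef
      set g : ℕ → ℝ := fun j => if h : j < n then A i ⟨j, h⟩ * X ⟨j, h⟩ else 0 with hg
      have hsum1 : A'.mulVec Y s = ∑ j ∈ Finset.Ico k₁ (k₂ + 1), g j := by
        simp only [Matrix.mulVec, dotProduct]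
        rw [Finset.sum_Ico_eq_sum_range]
        have hlen : k₂ + 1 - k₁ = k₂ - k₁ + 1 := by omega
        rw [hlen, ← Fin.sum_univ_eq_sum_range (fun j => g (k₁ + j)) (k₂ - k₁ + 1)]
        apply Finset.sum_congr rfl
        intro r _
        rw [hrowint s r hs0 hsl]
        have hr : k₁ + (r : ℕ) < n := by have := r.isLt; omega
        simp only [hg, hYdef, dif_pos hr]
        rfl
      have hsum2 : ∑ j ∈ Finset.Ico k₁ (k₂ + 1), g j = ∑ j ∈ Finset.range n, g j := by
        apply Finset.sum_subset
        · intro j hj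
          simp only [Finset.mem_Ico] at hj
          simp only [Finset.mem_range]; omega
        · intro j hj hj2
          simp only [Finset.mem_range] at hj
          simp only [Finset.mem_Ico, not_and_or, not_le, not_lt] at hj2
          simp only [hg, dif_pos hj]
          have hz : A i ⟨j, hj⟩ = 0 := by
            apply htri
            simp only [hidef]
            omega
          rw [hz, zero_mul]
      have hsum3 : ∑ j ∈ Finset.range n, g j = F i := by
        rw [← Fin.sum_univ_eq_sum_range g n]
        have hc : ∀ j : Fin n, g (j : ℕ) = A i j * X j := by
          intro j; simp only [hg, dif_pos j.isLt]
        rw [Finset.sum_congr rfl fun j _ => hc j]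
        have := congrFun hX i
        simpa [Matrix.mulVec, dotProduct] using this
      have hne1 : s ≠ ⟨0, h0N⟩ := by simp only [ne_eq, Fin.ext_iff]; omega
      have hne2 : s ≠ ⟨k₂ - k₁, hN⟩ := by simp only [ne_eq, Fin.ext_iff]; omega
      have hrhs : (q + X ⟨k₁, by omega⟩ • (Pi.single (⟨0, h0N⟩ : Fin (k₂ - k₁ + 1)) (1 : ℝ) : Fin (k₂ - k₁ + 1) → ℝ)
          + X ⟨k₂, by omega⟩ • (Pi.single (⟨k₂ - k₁, hN⟩ : Fin (k₂ - k₁ + 1)) (1 : ℝ) : Fin (k₂ - k₁ + 1) → ℝ)) s = q s := by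
        have hz1 : (Pi.single (⟨0, h0N⟩ : Fin (k₂ - k₁ + 1)) (1:ℝ) : Fin (k₂ - k₁ + 1) → ℝ) s = 0 :=
          Pi.single_eq_of_ne hne1 1
        have hz2 : (Pi.single (⟨k₂ - k₁, hN⟩ : Fin (k₂ - k₁ + 1)) (1:ℝ) : Fin (k₂ - k₁ + 1) → ℝ) s = 0 :=
          Pi.single_eq_of_ne hne2 1
        simp only [Pi.add_apply, Pi.smul_apply, smul_eq_mul]
        rw [hz1, hz2, mul_zero, mul_zero, add_zero, add_zero]
      rw [hsum1, hsum2, hsum3, hrhs, hqint s hs0 hsl]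
  have key2 : A'.mulVec Y =
      A'.mulVec (W + X ⟨k₁, by omega⟩ • R + X ⟨k₂, by omega⟩ • L) := by
    rw [key, Matrix.mulVec_add, Matrix.mulVec_add, Matrix.mulVec_smul,
      Matrix.mulVec_smul, hW, hR, hL]
  have hY := hinj key2
  have hev := congrFun hY ⟨m - k₁, by omega⟩
  have hYm : Y ⟨m - k₁, by omega⟩ = X ⟨m, by omega⟩ := by
    simp only [hYdef]; congr 1; apply Fin.ext; simp; omega
  rw [hYm] at hev
  simpa [Pi.add_apply, Pi.smul_apply, smul_eq_mul] using hev
end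

section
/- Let A be an n×n real tridiagonal matrix with diagonal b_i, subdiagonal a_i, superdiagonal c_i, and fix 1 ≤ k ≤ n. Suppose the sweep coefficients α₁ = −c₁/b₁ and α_i = −c_i/(b_i + a_{i−1} α_{i−1}) for 2 ≤ i ≤ k−1 are well defined (all denominators nonzero). Then the system B^L_k Z = e_k has the unique solution with components Z_k = 1 and Z_i = ∏_{j=i}^{k−1} α_j for 1 ≤ i ≤ k−1. -/
open Matrix Finset

/-- The explicit product formula from the proof of Theorem 4 of the paper,
stated 0-indexed inside the block: `B` is the paper's `k × k` matrix
`B^L_k` (rows `1, …, k-1` of the tridiagonal matrix `A` restricted to the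
columns `1, …, k`, last row `e_kᵀ`); `b, a, c` (1-indexed) are the diagonal,
subdiagonal and superdiagonal of `A`; `α` are the Thomas sweep coefficients,
assumed well defined.  Then `B Z = e_k` has the unique solution with
components `Z_k = 1` and `Z_i = ∏_{j=i}^{k-1} α_j`. -/
theorem stmt_8 (n k : ℕ) (hk : 1 ≤ k) (hkn : k ≤ n)
    (A : Matrix (Fin n) (Fin n) ℝ)
    (htri : ∀ i j : Fin n, (i : ℕ) + 1 < (j : ℕ) ∨ (j : ℕ) + 1 < (i : ℕ) → A i j = 0)
    (b a c : ℕ → ℝ)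
    (hb : ∀ i, ∀ _ : 1 ≤ i, ∀ _ : i ≤ n,
      b i = A ⟨i - 1, by omega⟩ ⟨i - 1, by omega⟩)
    (ha : ∀ i, ∀ _ : 1 ≤ i, ∀ _ : i ≤ n - 1,
      a i = A ⟨i, by omega⟩ ⟨i - 1, by omega⟩)
    (hc : ∀ i, ∀ _ : 1 ≤ i, ∀ _ : i ≤ n - 1,
      c i = A ⟨i - 1, by omega⟩ ⟨i, by omega⟩)
    (α : ℕ → ℝ) (hα1 : α 1 = -c 1 / b 1)
    (hαrec : ∀ i, 2 ≤ i → i ≤ k - 1 →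
      α i = -c i / (b i + a (i - 1) * α (i - 1)))
    (hb1 : b 1 ≠ 0)
    (hden : ∀ i, 2 ≤ i → i ≤ k - 1 → b i + a (i - 1) * α (i - 1) ≠ 0)
    (B : Matrix (Fin k) (Fin k) ℝ)
    (hB : ∀ s r : Fin k, B s r =
      if (s : ℕ) = k - 1 then (if r = s then 1 else 0)
      else A ⟨(s : ℕ), by have := s.isLt; omega⟩ ⟨(r : ℕ), by have := r.isLt; omega⟩)
    (Z : Fin k → ℝ)
    (hZ : ∀ s : Fin k, Z s =
      if (s : ℕ) = k - 1 then 1 else ∏ j ∈ Finset.Icc ((s : ℕ) + 1) (k - 1), α j) :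
    B.mulVec Z = Pi.single ⟨k - 1, by omega⟩ 1 ∧
      ∀ Z' : Fin k → ℝ, B.mulVec Z' = Pi.single ⟨k - 1, by omega⟩ 1 → Z' = Z := by
  have hk1 : k - 1 < k := by omega
  -- last row of B·W is just W at the last index
  have rowlast : ∀ W : Fin k → ℝ, B.mulVec W ⟨k-1, hk1⟩ = W ⟨k-1, hk1⟩ := by
    intro W
    simp only [mulVec, dotProduct]
    rw [Finset.sum_eq_single (⟨k-1, hk1⟩ : Fin k)]
    · rw [hB]; simp
    · intro r _ hr
      rw [hB]; simp [hr]
    · intro h; exact absurd (Finset.mem_univ _) h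
  -- entries of interior rows away from the diagonal band vanish
  have rowzero : ∀ (s : ℕ) (hs : s < k - 1) (r : Fin k),
      (r : ℕ) ≠ s - 1 → (r : ℕ) ≠ s → (r : ℕ) ≠ s + 1 →
      B ⟨s, by omega⟩ r = 0 := by
    intro s hs r h1 h2 h3
    rw [hB]
    rw [if_neg (show ¬ (s = k - 1) by omega)]
    refine htri _ _ ?_
    simp only []
    omega
  -- interior row with s ≥ 1
  have rowi : ∀ (W : Fin k → ℝ) (s : ℕ), ∀ _ : 1 ≤ s, ∀ _ : s < k - 1,
      B.mulVec W ⟨s, by omega⟩ =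
        a s * W ⟨s-1, by omega⟩ + b (s+1) * W ⟨s, by omega⟩ + c (s+1) * W ⟨s+1, by omega⟩ := by
    intro W s h1 hs
    simp only [mulVec, dotProduct]
    rw [← Finset.sum_subset (Finset.subset_univ
        ({⟨s-1, by omega⟩, ⟨s, by omega⟩, ⟨s+1, by omega⟩} : Finset (Fin k)))]
    · rw [Finset.sum_insert (by
          simp only [Finset.mem_insert, Finset.mem_singleton, Fin.mk.injEq]; omega),
        Finset.sum_insert (by
          simp only [Finset.mem_singleton, Fin.mk.injEq]; omega), Finset.sum_singleton]
      have e1 : B ⟨s, by omega⟩ ⟨s-1, by omega⟩ = a s := by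
        rw [hB, if_neg (show ¬ (s = k - 1) by omega)]
        exact (ha s h1 (by omega)).symm
      have e2 : B ⟨s, by omega⟩ ⟨s, by omega⟩ = b (s+1) := by
        rw [hB, if_neg (show ¬ (s = k - 1) by omega)]
        exact (hb (s+1) (by omega) (by omega)).symm
      have e3 : B ⟨s, by omega⟩ ⟨s+1, by omega⟩ = c (s+1) := by
        rw [hB, if_neg (show ¬ (s = k - 1) by omega)]
        exact (hc (s+1) (by omega) (by omega)).symm
      rw [e1, e2, e3]; ring
    · intro r _ hr
      simp only [Finset.mem_insert, Finset.mem_singleton, Fin.ext_iff] at hr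
      push_neg at hr
      rw [rowzero s hs r (by omega) (by omega) (by omega), zero_mul]
  -- row 0 (when k ≥ 2)
  have row0 : ∀ (W : Fin k → ℝ), ∀ _ : 0 < k - 1,
      B.mulVec W ⟨0, by omega⟩ = b 1 * W ⟨0, by omega⟩ + c 1 * W ⟨1, by omega⟩ := by
    intro W hs
    simp only [mulVec, dotProduct]
    rw [← Finset.sum_subset (Finset.subset_univ
        ({⟨0, by omega⟩, ⟨1, by omega⟩} : Finset (Fin k)))]
    · rw [Finset.sum_insert (by
          simp only [Finset.mem_singleton, Fin.mk.injEq]; omega), Finset.sum_singleton]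
      have e2 : B ⟨0, by omega⟩ ⟨0, by omega⟩ = b 1 := by
        rw [hB, if_neg (show ¬ (0 = k - 1) by omega)]
        exact (hb 1 (by omega) (by omega)).symm
      have e3 : B ⟨0, by omega⟩ ⟨1, by omega⟩ = c 1 := by
        rw [hB, if_neg (show ¬ (0 = k - 1) by omega)]
        exact (hc 1 (by omega) (by omega)).symm
      rw [e2, e3]
    · intro r _ hr
      simp only [Finset.mem_insert, Finset.mem_singleton, Fin.ext_iff] at hr
      push_neg at hr
      rw [rowzero 0 hs r (by omega) (by omega) (by omega), zero_mul]
  -- Z satisfies the sweep relation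
  have Zrel : ∀ s : ℕ, ∀ _ : s < k - 1, Z ⟨s, by omega⟩ = α (s+1) * Z ⟨s+1, by omega⟩ := by
    intro s hs
    rw [hZ, hZ]
    simp only []
    rw [if_neg (show ¬ (s = k - 1) by omega)]
    have hins : Finset.Icc (s+1) (k-1) = insert (s+1) (Finset.Icc (s+2) (k-1)) := by
      ext x; simp only [Finset.mem_Icc, Finset.mem_insert]; omega
    rw [hins, Finset.prod_insert (by simp)]
    by_cases h : s + 1 = k - 1
    · rw [if_pos h, Finset.Icc_eq_empty (by omega), Finset.prod_empty]
    · rw [if_neg h]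
  -- last component of any solution is 1
  have Wlast : ∀ W : Fin k → ℝ, B.mulVec W = Pi.single ⟨k-1, hk1⟩ 1 →
      W ⟨k-1, hk1⟩ = 1 := by
    intro W hW
    have h := rowlast W
    rw [hW, Pi.single_eq_same] at h
    exact h.symm
  -- any solution satisfies the sweep relation
  have rel_of : ∀ W : Fin k → ℝ, B.mulVec W = Pi.single ⟨k-1, hk1⟩ 1 →
      ∀ s : ℕ, ∀ _ : s < k - 1, W ⟨s, by omega⟩ = α (s+1) * W ⟨s+1, by omega⟩ := by
    intro W hW s
    induction s with
    | zero =>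
      intro hs
      have h0 := row0 W hs
      rw [hW, Pi.single_eq_of_ne (by simp [Fin.ext_iff]; omega)] at h0
      rw [hα1, div_mul_eq_mul_div, eq_div_iff hb1]
      linear_combination -h0
    | succ s ih =>
      intro hs
      have hrec := rowi W (s+1) (by omega) hs
      rw [hW, Pi.single_eq_of_ne (by simp [Fin.ext_iff]; omega)] at hrec
      simp only [Nat.add_sub_cancel] at hrec
      rw [ih (by omega)] at hrec
      have hd := hden (s+2) (by omega) (by omega)
      rw [hαrec (s+2) (by omega) (by omega)]
      simp only [show s + 2 - 1 = s + 1 from rfl] at hd ⊢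
      rw [div_mul_eq_mul_div, eq_div_iff hd]
      linear_combination -hrec
  constructor
  · funext x
    by_cases hx : (x : ℕ) = k - 1
    · have hxe : x = ⟨k-1, hk1⟩ := Fin.ext hx
      rw [hxe, rowlast Z, hZ, Pi.single_eq_same, if_pos rfl]
    · have hxlt : (x : ℕ) < k - 1 := by have := x.isLt; omega
      rw [Pi.single_eq_of_ne (by simp [Fin.ext_iff]; omega)]
      by_cases h0 : (x : ℕ) = 0
      · have hxe : x = ⟨0, by omega⟩ := Fin.ext h0
        rw [hxe, row0 Z (by omega), Zrel 0 (by omega), hα1]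
        field_simp
        ring
      · obtain ⟨m, hm⟩ : ∃ m, (x:ℕ) = m + 1 := ⟨(x:ℕ)-1, by omega⟩
        have hxe : x = ⟨m+1, by omega⟩ := Fin.ext hm
        rw [hxe, rowi Z (m+1) (by omega) (by omega)]
        simp only [show m + 1 - 1 = m from rfl]
        rw [Zrel m (by omega), Zrel (m+1) (by omega)]
        have hd := hden (m+2) (by omega) (by omega)
        have hrc := hαrec (m+2) (by omega) (by omega)
        simp only [show m + 2 - 1 = m + 1 from rfl] at hd hrc
        rw [hrc]
        field_simp
        ring
  · intro Z' hZ'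
    have key : ∀ d : ℕ, d ≤ k - 1 → Z' ⟨k-1-d, by omega⟩ = Z ⟨k-1-d, by omega⟩ := by
      intro d
      induction d with
      | zero =>
        intro _
        simp only [Nat.sub_zero]
        rw [Wlast Z' hZ', hZ, if_pos rfl]
      | succ d ih =>
        intro hd
        have hs : k - 1 - (d+1) < k - 1 := by omega
        have h1 := rel_of Z' hZ' (k-1-(d+1)) hs
        have h2 := Zrel (k-1-(d+1)) hs
        have hfix : (⟨k-1-(d+1)+1, by omega⟩ : Fin k) = ⟨k-1-d, by omega⟩ := by
          simp only [Fin.mk.injEq]; omega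
        rw [hfix] at h1 h2
        rw [h1, h2, ih (by omega)]
    funext x
    have hx : (x : ℕ) ≤ k - 1 := by have := x.isLt; omega
    have := key (k-1-(x:ℕ)) (by omega)
    have hfix : (⟨k-1-(k-1-(x:ℕ)), by omega⟩ : Fin k) = x := by
      simp only [Fin.ext_iff]; omega
    rwa [hfix] at this
end
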